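/- Let N ≥ 1, let x_1, …, x_{N+1} ∈ ℝ^N be affinely independent, fix α ≥ 0 and A* > 0, let y* lie in the open convex hull co{x_1,…,x_{N+1}}, and set s_i = A* e^{−α‖x_i − y*‖}/‖x_i − y*‖² (noise-free measurements). Define L(A, y) = Σ_{i=1}^{N+1} (s_i log z_i(A, y) − z_i(A, y)) with z_i(A, y) = A e^{−α‖x_i − y‖}/‖x_i − y‖². If y lies in the open convex hull, A > 0, and L(A, y) = L(A*, y*), then y = y* and A = A*; that is, (A*, y*) is the unique global maximizer of L over (0,∞) × co{x_1,…,x_{N+1}}. -/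

import Mathlib

open Real Finset

lemma aux_concave (s z : ℝ) (hs : 0 < s) (hz : 0 < z) :
    s * log z - z ≤ s * log s - s ∧ (s * log z - z = s * log s - s → z = s) := by
  have ht : 0 < z / s := div_pos hz hs
  have hlog : log (z / s) = log z - log s := Real.log_div hz.ne' hs.ne'
  have key : s * (z / s - 1) = z - s := by field_simp
  constructor
  · have hle : log (z / s) ≤ z / s - 1 := Real.log_le_sub_one_of_pos ht
    have := mul_le_mul_of_nonneg_left hle hs.le
    rw [key, hlog, mul_sub] at this
    linarith
  · intro h
    by_contra hne
    have hne1 : z / s ≠ 1 := by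
      intro h1; exact hne (by field_simp at h1; linarith)
    have hlt : log (z / s) < z / s - 1 := Real.log_lt_sub_one_of_pos ht hne1
    have := mul_lt_mul_of_pos_left hlt hs
    rw [key, hlog, mul_sub] at this
    linarith

lemma hull_closer {E : Type*} [NormedAddCommGroup E] [InnerProductSpace ℝ E]
    (X : Set E) (a b : E) (hX : ∀ p ∈ X, ‖p - a‖ ≤ ‖p - b‖)
    (hb : b ∈ convexHull ℝ X) : b = a := by
  set S : Set E := {w : E | (inner ℝ w (b - a) : ℝ) ≤ (‖b‖ ^ 2 - ‖a‖ ^ 2) / 2} with hS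
  have hlin : IsLinearMap ℝ (fun w : E => (inner ℝ w (b - a) : ℝ)) :=
    ⟨fun u v => inner_add_left u v _, fun c u => real_inner_smul_left u _ c⟩
  have hconv : Convex ℝ S := convex_halfSpace_le hlin _
  have hXS : X ⊆ S := by
    intro p hp
    have h1 := hX p hp
    have h2 : ‖p - a‖ ^ 2 ≤ ‖p - b‖ ^ 2 :=
      pow_le_pow_left₀ (norm_nonneg _) h1 2
    rw [norm_sub_sq_real, norm_sub_sq_real] at h2
    have h3 : (inner ℝ p (b - a) : ℝ) = (inner ℝ p b : ℝ) - inner ℝ p a := inner_sub_right p b a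
    simp only [hS, Set.mem_setOf_eq]
    linarith
  have hbS : b ∈ S := convexHull_min hXS hconv hb
  simp only [hS, Set.mem_setOf_eq] at hbS
  have h3 : (inner ℝ b (b - a) : ℝ) = (inner ℝ b b : ℝ) - inner ℝ b a := inner_sub_right b b a
  have h4 : (inner ℝ b b : ℝ) = ‖b‖ ^ 2 := real_inner_self_eq_norm_sq b
  have h5 : ‖b - a‖ ^ 2 ≤ 0 := by
    rw [norm_sub_sq_real]; linarith
  have h6 : ‖b - a‖ = 0 := by nlinarith [norm_nonneg (b - a), sq_nonneg ‖b - a‖]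
  rw [← sub_eq_zero]
  exact norm_eq_zero.mp h6

theorem unique_global_maximizer_loglikelihood {N : ℕ} (hN : 1 ≤ N)
    (x : Fin (N + 1) → EuclideanSpace ℝ (Fin N))
    (hx : AffineIndependent ℝ x)
    (α Astar : ℝ) (hα : 0 ≤ α) (hAstar : 0 < Astar)
    (ystar : EuclideanSpace ℝ (Fin N))
    (hystar : ystar ∈ interior (convexHull ℝ (Set.range x)))
    (s : Fin (N + 1) → ℝ)
    (hsdef : ∀ i, s i = Astar * exp (-α * ‖x i - ystar‖) / ‖x i - ystar‖ ^ 2)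
    (L : ℝ → EuclideanSpace ℝ (Fin N) → ℝ)
    (hLdef : ∀ A w, L A w =
      ∑ i, (s i * log (A * exp (-α * ‖x i - w‖) / ‖x i - w‖ ^ 2)
            - A * exp (-α * ‖x i - w‖) / ‖x i - w‖ ^ 2)) :
    ∀ A : ℝ, 0 < A → ∀ y ∈ interior (convexHull ℝ (Set.range x)),
      L A y ≤ L Astar ystar ∧ (L A y = L Astar ystar → y = ystar ∧ A = Astar) := by
  classical
  -- Build the affine basis
  have htot : affineSpan ℝ (Set.range x) = ⊤ := by
    rw [hx.affineSpan_eq_top_iff_card_eq_finrank_add_one]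
    simp [finrank_euclideanSpace_fin]
  let b : AffineBasis (Fin (N + 1)) ℝ (EuclideanSpace ℝ (Fin N)) := ⟨x, hx, htot⟩
  have hbrange : Set.range ⇑b = Set.range x := rfl
  have hint : interior (convexHull ℝ (Set.range x)) =
      {w | ∀ i, 0 < b.coord i w} := by
    rw [← hbrange]; exact b.interior_convexHull
  -- points in the interior are distinct from all sensors
  have hne : ∀ w ∈ interior (convexHull ℝ (Set.range x)), ∀ i, 0 < ‖x i - w‖ := by
    intro w hw i
    rw [hint] at hw
    rw [norm_pos_iff, sub_ne_zero]
    intro hEq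
    have hnt : Nontrivial (Fin (N + 1)) :=
      Fin.nontrivial_iff_two_le.mpr (by omega)
    obtain ⟨j, hj⟩ := exists_ne i
    have h1 := hw j
    have h2 : b.coord j (b i) = 0 := by
      rw [AffineBasis.coord_apply]; simp [hj]
    have h2' : b.coord j w = 0 := by rw [← hEq]; exact h2
    rw [h2'] at h1
    exact lt_irrefl 0 h1
  intro A hA y hy
  have hr : ∀ i, 0 < ‖x i - y‖ := hne y hy
  have hrs : ∀ i, 0 < ‖x i - ystar‖ := hne ystar hystar
  set z : Fin (N + 1) → ℝ := fun i => A * exp (-α * ‖x i - y‖) / ‖x i - y‖ ^ 2 with hz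
  have hzpos : ∀ i, 0 < z i := fun i =>
    div_pos (mul_pos hA (exp_pos _)) (pow_pos (hr i) 2)
  have hspos : ∀ i, 0 < s i := fun i => by
    rw [hsdef i]
    exact div_pos (mul_pos hAstar (exp_pos _)) (pow_pos (hrs i) 2)
  have hLy : L A y = ∑ i, (s i * log (z i) - z i) := hLdef A y
  have hLs : L Astar ystar = ∑ i, (s i * log (s i) - s i) := by
    rw [hLdef Astar ystar]
    refine Finset.sum_congr rfl fun i _ => ?_
    rw [← hsdef i]
  have hterm := fun i => aux_concave (s i) (z i) (hspos i) (hzpos i)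
  constructor
  · rw [hLy, hLs]
    exact Finset.sum_le_sum fun i _ => (hterm i).1
  · intro hEq
    rw [hLy, hLs] at hEq
    -- each term equal
    have hzs : ∀ i, z i = s i := by
      have hsum : ∑ i, ((s i * log (s i) - s i) - (s i * log (z i) - z i)) = 0 := by
        rw [Finset.sum_sub_distrib, hEq, sub_self]
      have h0 : ∀ i ∈ Finset.univ, (s i * log (s i) - s i) - (s i * log (z i) - z i) = 0 :=
        (Finset.sum_eq_zero_iff_of_nonneg
          (fun i _ => sub_nonneg.mpr (hterm i).1)).mp hsum
      intro i
      exact (hterm i).2 (by have := h0 i (Finset.mem_univ i); linarith)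
    -- logarithmic identity
    have hlogeq : ∀ i, log A - α * ‖x i - y‖ - 2 * log ‖x i - y‖
        = log Astar - α * ‖x i - ystar‖ - 2 * log ‖x i - ystar‖ := by
      intro i
      have h1 : log (z i) = log A - α * ‖x i - y‖ - 2 * log ‖x i - y‖ := by
        rw [hz]
        rw [Real.log_div (mul_pos hA (exp_pos _)).ne' (pow_pos (hr i) 2).ne',
          Real.log_mul hA.ne' (exp_ne_zero _), Real.log_exp, Real.log_pow]
        push_cast; ring
      have h2 : log (s i) = log Astar - α * ‖x i - ystar‖ - 2 * log ‖x i - ystar‖ := by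
        rw [hsdef i]
        rw [Real.log_div (mul_pos hAstar (exp_pos _)).ne' (pow_pos (hrs i) 2).ne',
          Real.log_mul hAstar.ne' (exp_ne_zero _), Real.log_exp, Real.log_pow]
        push_cast; ring
      rw [← h1, ← h2, hzs i]
    have hyy : y = ystar := by
      rcases le_or_gt (log Astar) (log A) with hc | hc
      · -- all sensors at least as close to ystar : ‖x i - ystar‖ ≤ ‖x i - y‖
        have hcomp : ∀ i, ‖x i - ystar‖ ≤ ‖x i - y‖ := by
          intro i
          by_contra hcon
          push_neg at hcon
          have hllt : log ‖x i - y‖ < log ‖x i - ystar‖ := Real.log_lt_log (hr i) hcon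
          have hmul : α * ‖x i - y‖ ≤ α * ‖x i - ystar‖ :=
            mul_le_mul_of_nonneg_left hcon.le hα
          have := hlogeq i
          linarith
        refine hull_closer (Set.range x) ystar y ?_ (interior_subset hy)
        rintro p ⟨i, rfl⟩
        exact hcomp i
      · have hcomp : ∀ i, ‖x i - y‖ ≤ ‖x i - ystar‖ := by
          intro i
          by_contra hcon
          push_neg at hcon
          have hllt : log ‖x i - ystar‖ < log ‖x i - y‖ := Real.log_lt_log (hrs i) hcon
          have hmul : α * ‖x i - ystar‖ ≤ α * ‖x i - y‖ :=
            mul_le_mul_of_nonneg_left hcon.le hα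
          have := hlogeq i
          linarith
        exact (hull_closer (Set.range x) y ystar
          (by rintro p ⟨i, rfl⟩; exact hcomp i) (interior_subset hystar)).symm
    refine ⟨hyy, ?_⟩
    have h0 := hlogeq 0
    rw [hyy] at h0
    have hAlog : log A = log Astar := by linarith
    calc A = exp (log A) := (Real.exp_log hA).symm
      _ = exp (log Astar) := by rw [hAlog]
      _ = Astar := Real.exp_log hAstar
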